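/- Let D be the Fokker-Planck operator Dφ = (1/2)div(B∇φ) - div(H s φ) on functions of s ∈ ℝⁿ, where B is symmetric positive semidefinite and H real. If χ is an eigenvalue of D with eigenfunction φ which is smooth, square-integrable with square-integrable gradient, and normalized ∫|φ|² ds = 1, and all boundary terms vanish in integration by parts (e.g. φ Schwartz), then Re(χ) ≤ -(1/2) tr(H). -/

import Mathlib

open Matrix MeasureTheory

lemma aux_normsq_hasFDerivAt {E : Type*} [NormedAddCommGroup E] [NormedSpace ℝ E]
    {φ : E → ℂ} {x : E} (hφ : DifferentiableAt ℝ φ x) :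
    HasFDerivAt (fun s => ‖φ s‖ ^ 2)
      ((2 * (φ x).re) • (Complex.reCLM.comp (fderiv ℝ φ x))
        + (2 * (φ x).im) • (Complex.imCLM.comp (fderiv ℝ φ x))) x := by
  have hf := hφ.hasFDerivAt
  have hu : HasFDerivAt (fun s => (φ s).re) (Complex.reCLM.comp (fderiv ℝ φ x)) x :=
    Complex.reCLM.hasFDerivAt.comp x hf
  have hv : HasFDerivAt (fun s => (φ s).im) (Complex.imCLM.comp (fderiv ℝ φ x)) x :=
    Complex.imCLM.hasFDerivAt.comp x hf
  have h := (hu.mul hu).add (hv.mul hv)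
  have heq : (fun s => ‖φ s‖ ^ 2) = fun s => (φ s).re * (φ s).re + (φ s).im * (φ s).im := by
    funext s
    rw [Complex.sq_norm, Complex.normSq_apply]
  rw [heq]
  exact h.congr_fderiv (by module)

lemma aux_psd_re {n : ℕ} (B : Matrix (Fin n) (Fin n) ℝ) (hB : B.PosSemidef) (u : Fin n → ℂ) :
    0 ≤ ∑ i, ∑ j, B i j * ((starRingEnd ℂ) (u i) * u j).re := by
  have h1 := hB.dotProduct_mulVec_nonneg (fun i => (u i).re)
  have h2 := hB.dotProduct_mulVec_nonneg (fun i => (u i).im)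
  simp only [dotProduct, Matrix.mulVec, Pi.star_apply, star_trivial] at h1 h2
  have key : ∑ i, ∑ j, B i j * ((starRingEnd ℂ) (u i) * u j).re
      = (∑ i, (u i).re * ∑ j, B i j * (u j).re) + ∑ i, (u i).im * ∑ j, B i j * (u j).im := by
    rw [← Finset.sum_add_distrib]
    refine Finset.sum_congr rfl fun i _ => ?_
    rw [Finset.mul_sum, Finset.mul_sum, ← Finset.sum_add_distrib]
    refine Finset.sum_congr rfl fun j _ => ?_
    simp only [Complex.mul_re, Complex.conj_re, Complex.conj_im]
    ring
  rw [key]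
  exact add_nonneg h1 h2

set_option maxHeartbeats 1000000 in
/-- Let `D φ = (1/2) div(B ∇φ) - div(H s φ)` be the Fokker–Planck operator, with `B` real
symmetric positive semidefinite and `H` real. If `φ` is a Schwartz eigenfunction of `D`
with eigenvalue `χ`, normalized so that `∫ |φ|² = 1`, then `Re χ ≤ -(1/2) tr H`. -/
theorem stmt_12 {n : ℕ} (B H : Matrix (Fin n) (Fin n) ℝ)
    (hB : B.PosSemidef)
    (φ : SchwartzMap (Fin n → ℝ) ℂ) (χ : ℂ)
    (Dφ : (Fin n → ℝ) → ℂ)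
    (hDφ : Dφ = fun s =>
      (1 / 2 : ℂ) * ∑ i, ∑ j, (B i j : ℂ) *
          fderiv ℝ (fun t => fderiv ℝ (⇑φ) t (Pi.single j 1)) s (Pi.single i 1)
        - (H.trace : ℂ) * φ s
        - ∑ i, (H.mulVec s i : ℂ) * fderiv ℝ (⇑φ) s (Pi.single i 1))
    (heig : ∀ s, Dφ s = χ * φ s)
    (hnorm : ∫ s : Fin n → ℝ, ‖φ s‖ ^ 2 = 1) :
    χ.re ≤ -(1 / 2) * H.trace := by
  classical
  -- abbreviations
  set d1 : Fin n → SchwartzMap (Fin n → ℝ) ℂ :=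
    fun j => LineDeriv.lineDerivOpCLM ℝ (SchwartzMap (Fin n → ℝ) ℂ) (Pi.single j 1 : Fin n → ℝ) φ with hd1def
  set d2 : Fin n → Fin n → SchwartzMap (Fin n → ℝ) ℂ :=
    fun i j => LineDeriv.lineDerivOpCLM ℝ (SchwartzMap (Fin n → ℝ) ℂ) (Pi.single i 1 : Fin n → ℝ) (d1 j) with hd2def
  have hd1 : ∀ j s, d1 j s = fderiv ℝ (⇑φ) s (Pi.single j 1) := fun j s => rfl
  have hd1f : ∀ j, ⇑(d1 j) = fun t => fderiv ℝ (⇑φ) t (Pi.single j 1) := fun j => funext (hd1 j)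
  have hd2 : ∀ i j s, d2 i j s
      = fderiv ℝ (fun t => fderiv ℝ (⇑φ) t (Pi.single j 1)) s (Pi.single i 1) := by
    intro i j s
    rw [← hd1f]
    rfl
  set K : ℂ →L[ℝ] ℂ := Complex.conjCLE.toContinuousLinearMap with hK
  set cφ : (Fin n → ℝ) → ℂ := fun s => K (φ s) with hcφdef
  have hcφ : ∀ s, cφ s = (starRingEnd ℂ) (φ s) := fun s => rfl
  have hcφd : Differentiable ℝ cφ := K.differentiable.comp φ.differentiable
  have hcφc : Continuous cφ := K.continuous.comp φ.continuous
  have hfdc : ∀ s, fderiv ℝ cφ s = K.comp (fderiv ℝ (⇑φ) s) := fun s =>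
    (K.hasFDerivAt.comp s φ.differentiableAt.hasFDerivAt).fderiv
  have hfdc' : ∀ i s, fderiv ℝ cφ s (Pi.single i 1) = (starRingEnd ℂ) (d1 i s) := by
    intro i s; rw [hfdc]; rfl
  -- bounds and integrability helpers
  set Cφ : ℝ := SchwartzMap.seminorm ℝ 0 0 φ with hCφdef
  have hCφ : ∀ s, ‖φ s‖ ≤ Cφ := fun s => φ.norm_le_seminorm ℝ s
  have hCφ0 : 0 ≤ Cφ := le_trans (norm_nonneg _) (hCφ 0)
  have hcφb : ∀ s, ‖cφ s‖ ≤ Cφ := fun s => by rw [hcφ, RCLike.norm_conj]; exact hCφ s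
  have base : ∀ ψ : SchwartzMap (Fin n → ℝ) ℂ, Integrable (fun s => ‖s‖ * ‖ψ s‖) volume :=
    fun ψ => by simpa using ψ.integrable_pow_mul volume 1
  have intcφ : Integrable cφ volume :=
    φ.integrable.norm.mono' hcφc.aestronglyMeasurable
      (ae_of_all _ fun s => by rw [hcφ, RCLike.norm_conj])
  have intMulConj : ∀ ψ : SchwartzMap (Fin n → ℝ) ℂ,
      Integrable (fun s => ψ s * cφ s) volume := fun ψ =>
    intcφ.bdd_mul ψ.continuous.aestronglyMeasurable
      (ae_of_all _ fun x => ψ.norm_le_seminorm ℝ x)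
  have intConjMulLeft : ∀ ψ : SchwartzMap (Fin n → ℝ) ℂ,
      Integrable (fun s => cφ s * ψ s) volume := fun ψ =>
    ψ.integrable.bdd_mul hcφc.aestronglyMeasurable (ae_of_all _ hcφb)
  have intConjMul : ∀ ψ θ : SchwartzMap (Fin n → ℝ) ℂ,
      Integrable (fun s => (starRingEnd ℂ) (ψ s) * θ s) volume := fun ψ θ =>
    θ.integrable.bdd_mul (K.continuous.comp ψ.continuous).aestronglyMeasurable
      (ae_of_all _ fun x => by
        rw [show (starRingEnd ℂ) (ψ x) = K (ψ x) from rfl]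
        show ‖(starRingEnd ℂ) (ψ x)‖ ≤ _
        rw [RCLike.norm_conj]; exact ψ.norm_le_seminorm ℝ x)
  have growIntC : ∀ (F : (Fin n → ℝ) → ℂ), AEStronglyMeasurable F volume → ∀ (c : ℝ)
      (ψ : SchwartzMap (Fin n → ℝ) ℂ), (∀ s, ‖F s‖ ≤ c * (‖s‖ * ‖ψ s‖)) →
      Integrable F volume :=
    fun F hF c ψ hb => ((base ψ).const_mul c).mono' hF (ae_of_all _ hb)
  have growIntR : ∀ (F : (Fin n → ℝ) → ℝ), AEStronglyMeasurable F volume → ∀ (c : ℝ)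
      (ψ : SchwartzMap (Fin n → ℝ) ℂ), (∀ s, ‖F s‖ ≤ c * (‖s‖ * ‖ψ s‖)) →
      Integrable F volume :=
    fun F hF c ψ hb => ((base ψ).const_mul c).mono' hF (ae_of_all _ hb)
  -- the linear maps s ↦ (H s) i
  set Li : Fin n → (Fin n → ℝ) →L[ℝ] ℝ := fun i =>
    LinearMap.toContinuousLinearMap ((LinearMap.proj i).comp (Matrix.mulVecLin H)) with hLidef
  have hLi : ∀ i s, Li i s = H.mulVec s i := fun i s => rfl
  have hLib : ∀ i s, |H.mulVec s i| ≤ ‖Li i‖ * ‖s‖ := fun i s => by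
    rw [← hLi, ← Real.norm_eq_abs]; exact (Li i).le_opNorm s
  have hLie : ∀ i, Li i (Pi.single i 1) = H i i := fun i => by
    rw [hLi, Matrix.mulVec_single]; simp
  -- main integrability facts
  have IA : ∀ i j, Integrable (fun s => d2 i j s * cφ s) volume := fun i j => intMulConj (d2 i j)
  have IB : Integrable (fun s => φ s * cφ s) volume := intMulConj φ
  have IC : ∀ i, Integrable (fun s => ((H.mulVec s i : ℝ) : ℂ) * (d1 i s * cφ s)) volume := by
    intro i
    refine growIntC _ ?_ (‖Li i‖ * Cφ) (d1 i) ?_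
    · exact ((Complex.continuous_ofReal.comp ((Li i).continuous)).mul
        ((d1 i).continuous.mul hcφc)).aestronglyMeasurable
    · intro s
      have h1 : ‖((H.mulVec s i : ℝ) : ℂ) * (d1 i s * cφ s)‖
          = |H.mulVec s i| * ‖d1 i s‖ * ‖φ s‖ := by
        rw [hcφ]
        simp [norm_mul, Complex.norm_real, mul_assoc]
      rw [h1]
      calc |H.mulVec s i| * ‖d1 i s‖ * ‖φ s‖
          ≤ (‖Li i‖ * ‖s‖) * ‖d1 i s‖ * Cφ := by
            refine mul_le_mul (mul_le_mul (hLib i s) le_rfl (norm_nonneg _) (by positivity))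
              (hCφ s) (norm_nonneg _) (by positivity)
        _ = (‖Li i‖ * Cφ) * (‖s‖ * ‖d1 i s‖) := by ring
  -- value of ∫ φ * conj φ
  have Ig : Integrable (fun s => ‖φ s‖ ^ 2) volume := by
    have h : Integrable (fun s => ‖φ s‖ * ‖φ s‖) volume :=
      (φ.integrable (μ := volume)).norm.bdd_mul φ.continuous.norm.aestronglyMeasurable
        (ae_of_all _ fun x => by rw [norm_norm]; exact hCφ x)
    simpa [pow_two] using h
  have h1 : ∫ s, φ s * cφ s = 1 := by
    have hptw : ∀ s, φ s * cφ s = ((‖φ s‖ ^ 2 : ℝ) : ℂ) := fun s => by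
      rw [hcφ, Complex.mul_conj, Complex.sq_norm]
    simp only [hptw]
    show ∫ s, Complex.ofRealCLM (‖φ s‖ ^ 2) = 1
    rw [ContinuousLinearMap.integral_comp_comm _ Ig, hnorm]
    simp
  -- χ as the integral
  have hP : χ = ∫ s, Dφ s * cφ s := by
    have hptw : ∀ s, Dφ s * cφ s = χ * (φ s * cφ s) := fun s => by rw [heig]; ring
    simp only [hptw]
    rw [integral_const_mul, h1, mul_one]
  -- split the integral
  have hsplit1 : ∀ s, Dφ s * cφ s =
      (1 / 2 : ℂ) * ∑ i, ∑ j, (B i j : ℂ) * (d2 i j s * cφ s)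
      - (H.trace : ℂ) * (φ s * cφ s)
      - ∑ i, ((H.mulVec s i : ℝ) : ℂ) * (d1 i s * cφ s) := by
    intro s
    simp only [hDφ]
    simp only [← hd1]
    simp only [show ∀ (i j : Fin n) (s : Fin n → ℝ),
      fderiv ℝ (fun t => d1 j t) s (Pi.single i 1) = d2 i j s from fun i j s => rfl]
    simp only [sub_mul, Finset.sum_mul, mul_assoc]
  have intT1 : Integrable (fun s => (1 / 2 : ℂ) * ∑ i, ∑ j, (B i j : ℂ) * (d2 i j s * cφ s))
      volume :=
    (integrable_finset_sum _ fun i _ =>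
      integrable_finset_sum _ fun j _ => (IA i j).const_mul _).const_mul _
  have intT2 : Integrable (fun s => (H.trace : ℂ) * (φ s * cφ s)) volume := IB.const_mul _
  have intT3 : Integrable (fun s => ∑ i, ((H.mulVec s i : ℝ) : ℂ) * (d1 i s * cφ s)) volume :=
    integrable_finset_sum _ fun i _ => IC i
  have intT12 : Integrable (fun s =>
      (1 / 2 : ℂ) * ∑ i, ∑ j, (B i j : ℂ) * (d2 i j s * cφ s)
        - (H.trace : ℂ) * (φ s * cφ s)) volume := intT1.sub intT2
  have hsum : ∫ s, Dφ s * cφ s =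
      (1 / 2 : ℂ) * (∑ i, ∑ j, (B i j : ℂ) * ∫ s, d2 i j s * cφ s)
      - (H.trace : ℂ)
      - ∑ i, ∫ s, ((H.mulVec s i : ℝ) : ℂ) * (d1 i s * cφ s) := by
    simp only [hsplit1]
    rw [integral_sub intT12 intT3, integral_sub intT1 intT2, integral_const_mul,
      integral_finset_sum _ (fun i _ =>
        integrable_finset_sum _ fun j _ => (IA i j).const_mul _),
      integral_const_mul, h1, mul_one,
      integral_finset_sum _ (fun i _ => IC i)]
    have hinner : ∀ i, (∫ s, ∑ j, (B i j : ℂ) * (d2 i j s * cφ s))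
        = ∑ j, (B i j : ℂ) * ∫ s, d2 i j s * cφ s := by
      intro i
      rw [integral_finset_sum _ (fun j _ => (IA i j).const_mul _)]
      exact Finset.sum_congr rfl fun j _ => integral_const_mul _ _
    simp only [hinner]
  -- integration by parts for the second-order term
  have hJ : ∀ i j, (∫ s, d2 i j s * cφ s) = - ∫ s, (starRingEnd ℂ) (d1 i s) * d1 j s := by
    intro i j
    have e1 : (fun s => d2 i j s * cφ s)
        = fun s => cφ s * fderiv ℝ (⇑(d1 j)) s (Pi.single i 1) := by
      funext s; rw [mul_comm]; rfl
    have hf'g : Integrable (fun s => fderiv ℝ cφ s (Pi.single i 1) * d1 j s) volume :=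
      (intConjMul (d1 i) (d1 j)).congr
        (ae_of_all _ fun s => (congrArg (· * d1 j s) (hfdc' i s)).symm)
    have hfg' : Integrable (fun s => cφ s * fderiv ℝ (⇑(d1 j)) s (Pi.single i 1)) volume :=
      (intConjMulLeft (d2 i j)).congr (ae_of_all _ fun s => rfl)
    have hfg : Integrable (fun s => cφ s * d1 j s) volume := intConjMulLeft (d1 j)
    rw [show (∫ s, d2 i j s * cφ s) = ∫ s, cφ s * fderiv ℝ (⇑(d1 j)) s (Pi.single i 1)
        from congrArg _ e1,
      integral_mul_fderiv_eq_neg_fderiv_mul_of_integrable hf'g hfg' hfg (fun x _ => hcφd x)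
        (fun x _ => (d1 j).differentiable x),
      show (fun s => fderiv ℝ cφ s (Pi.single i 1) * d1 j s)
          = fun s => (starRingEnd ℂ) (d1 i s) * d1 j s
        from funext fun s => by rw [hfdc' i s]]
  -- the B-term has nonpositive real part
  have hA : (∑ i, ∑ j, (B i j : ℂ) * ∫ s, d2 i j s * cφ s).re ≤ 0 := by
    have h2 : ∀ i j, ((B i j : ℂ) * ∫ s, d2 i j s * cφ s).re
        = -(B i j * ∫ s, ((starRingEnd ℂ) (d1 i s) * d1 j s).re) := by
      intro i j
      rw [hJ i j]
      have hswap : (∫ s, (starRingEnd ℂ) (d1 i s) * d1 j s).re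
          = ∫ s, ((starRingEnd ℂ) (d1 i s) * d1 j s).re :=
        (Complex.reCLM.integral_comp_comm (intConjMul (d1 i) (d1 j))).symm
      rw [mul_neg, Complex.neg_re, ← hswap]
      simp [Complex.mul_re]
    have hqint : ∀ i j, Integrable (fun s => B i j * ((starRingEnd ℂ) (d1 i s) * d1 j s).re)
        volume := fun i j =>
      (Complex.reCLM.integrable_comp (intConjMul (d1 i) (d1 j))).const_mul _
    have hq : ∫ s, ∑ i, ∑ j, B i j * ((starRingEnd ℂ) (d1 i s) * d1 j s).re
        = ∑ i, ∑ j, B i j * ∫ s, ((starRingEnd ℂ) (d1 i s) * d1 j s).re := by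
      rw [integral_finset_sum _ (fun i _ => integrable_finset_sum _ fun j _ => hqint i j)]
      refine Finset.sum_congr rfl fun i _ => ?_
      rw [integral_finset_sum _ (fun j _ => hqint i j)]
      exact Finset.sum_congr rfl fun j _ => integral_const_mul _ _
    have hq0 : 0 ≤ ∫ s, ∑ i, ∑ j, B i j * ((starRingEnd ℂ) (d1 i s) * d1 j s).re :=
      integral_nonneg fun s => aux_psd_re B hB (fun i => d1 i s)
    rw [Complex.re_sum]
    simp only [Complex.re_sum, h2]
    simp only [Finset.sum_neg_distrib]
    rw [← hq] at *
    linarith [hq0]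
  -- the drift term
  have hgdiff : Differentiable ℝ (fun s : Fin n → ℝ => ‖φ s‖ ^ 2) := fun x =>
    (aux_normsq_hasFDerivAt φ.differentiableAt).differentiableAt
  have hgd : ∀ (i : Fin n) (s), fderiv ℝ (fun s : Fin n → ℝ => ‖φ s‖ ^ 2) s (Pi.single i 1)
      = 2 * ((starRingEnd ℂ) (φ s) * d1 i s).re := by
    intro i s
    rw [(aux_normsq_hasFDerivAt (φ.differentiableAt)).fderiv]
    simp only [ContinuousLinearMap.add_apply, ContinuousLinearMap.coe_smul',
      Pi.smul_apply, ContinuousLinearMap.comp_apply, Complex.reCLM_apply,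
      Complex.imCLM_apply, smul_eq_mul, Complex.mul_re, Complex.conj_re, Complex.conj_im,
      hd1]
    ring
  have hKi : ∀ i, (∫ s, ((H.mulVec s i : ℝ) : ℂ) * (d1 i s * cφ s)).re = -(1 / 2) * H i i := by
    intro i
    have hre : (∫ s, ((H.mulVec s i : ℝ) : ℂ) * (d1 i s * cφ s)).re
        = ∫ s, (((H.mulVec s i : ℝ) : ℂ) * (d1 i s * cφ s)).re :=
      (Complex.reCLM.integral_comp_comm (IC i)).symm
    have hptw : ∀ s, (((H.mulVec s i : ℝ) : ℂ) * (d1 i s * cφ s)).re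
        = (1 / 2) * (Li i s * fderiv ℝ (fun s : Fin n → ℝ => ‖φ s‖ ^ 2) s (Pi.single i 1)) := by
      intro s
      rw [hgd i s, hLi, hcφ]
      simp only [Complex.mul_re, Complex.mul_im, Complex.ofReal_re, Complex.ofReal_im,
        Complex.conj_re, Complex.conj_im]
      ring
    have hfg : Integrable (fun s => Li i s * ‖φ s‖ ^ 2) volume := by
      refine growIntR _ ?_ (‖Li i‖ * Cφ) φ fun s => ?_
      · exact ((Li i).continuous.mul
          ((continuous_norm.comp φ.continuous).pow 2)).aestronglyMeasurable
      · have : ‖Li i s * ‖φ s‖ ^ 2‖ = |Li i s| * (‖φ s‖ * ‖φ s‖) := by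
          rw [Real.norm_eq_abs, abs_mul, abs_of_nonneg (by positivity : (0:ℝ) ≤ ‖φ s‖ ^ 2)]
          ring
        rw [this]
        calc |Li i s| * (‖φ s‖ * ‖φ s‖) ≤ (‖Li i‖ * ‖s‖) * (‖φ s‖ * Cφ) := by
              refine mul_le_mul ?_ ?_ (by positivity) (by positivity)
              · rw [hLi]; exact hLib i s
              · exact mul_le_mul le_rfl (hCφ s) (norm_nonneg _) (norm_nonneg _)
          _ = (‖Li i‖ * Cφ) * (‖s‖ * ‖φ s‖) := by ring
    have hfg' : Integrable
        (fun s => Li i s * fderiv ℝ (fun s : Fin n → ℝ => ‖φ s‖ ^ 2) s (Pi.single i 1))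
        volume := by
      refine growIntR _ ?_ (2 * ‖Li i‖ * Cφ) (d1 i) fun s => ?_
      · refine (Continuous.aestronglyMeasurable ?_).congr
          (ae_of_all _ fun s => (congrArg (Li i s * ·) (hgd i s)).symm)
        · exact (Li i).continuous.mul
            (continuous_const.mul (Complex.continuous_re.comp
              ((K.continuous.comp φ.continuous).mul (d1 i).continuous)))
      · rw [hgd i s]
        have hb1 : |((starRingEnd ℂ) (φ s) * d1 i s).re| ≤ ‖φ s‖ * ‖d1 i s‖ := by
          refine (Complex.abs_re_le_norm _).trans ?_
          rw [norm_mul, RCLike.norm_conj]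
        have : ‖Li i s * (2 * ((starRingEnd ℂ) (φ s) * d1 i s).re)‖
            = |Li i s| * (2 * |((starRingEnd ℂ) (φ s) * d1 i s).re|) := by
          rw [Real.norm_eq_abs, abs_mul, abs_mul, abs_two]
        rw [this]
        calc |Li i s| * (2 * |((starRingEnd ℂ) (φ s) * d1 i s).re|)
            ≤ (‖Li i‖ * ‖s‖) * (2 * (‖φ s‖ * ‖d1 i s‖)) := by
              refine mul_le_mul ?_ (by linarith [hb1]) (by positivity) (by positivity)
              rw [hLi]; exact hLib i s
          _ ≤ (‖Li i‖ * ‖s‖) * (2 * (Cφ * ‖d1 i s‖)) := by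
              refine mul_le_mul le_rfl ?_ (by positivity) (by positivity)
              have := mul_le_mul (hCφ s) (le_refl (‖d1 i s‖)) (norm_nonneg _) hCφ0
              linarith
          _ = (2 * ‖Li i‖ * Cφ) * (‖s‖ * ‖d1 i s‖) := by ring
    have hf'g : Integrable
        (fun s => fderiv ℝ (⇑(Li i)) s (Pi.single i 1) * ‖φ s‖ ^ 2) volume := by
      refine (Ig.const_mul (H i i)).congr (ae_of_all _ fun s => ?_)
      show H i i * ‖φ s‖ ^ 2 = fderiv ℝ (⇑(Li i)) s (Pi.single i 1) * ‖φ s‖ ^ 2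
      rw [ContinuousLinearMap.fderiv, hLie]
    have hibp := integral_mul_fderiv_eq_neg_fderiv_mul_of_integrable hf'g hfg' hfg
      (fun x _ => (Li i).differentiable x) (fun x _ => hgdiff x)
    have hval : ∫ s, fderiv ℝ (⇑(Li i)) s (Pi.single i 1) * ‖φ s‖ ^ 2 = H i i := by
      rw [show (fun s => fderiv ℝ (⇑(Li i)) s (Pi.single i 1) * ‖φ s‖ ^ 2)
          = fun s => H i i * ‖φ s‖ ^ 2 from funext fun s => by
            rw [ContinuousLinearMap.fderiv, hLie],
        integral_const_mul, hnorm, mul_one]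
    rw [hre]
    simp only [hptw]
    rw [integral_const_mul, hibp, hval]
    ring
  -- assemble
  have hKsum : (∑ i, ∫ s, ((H.mulVec s i : ℝ) : ℂ) * (d1 i s * cφ s)).re
      = -(1 / 2) * H.trace := by
    rw [Complex.re_sum]
    simp only [hKi]
    rw [← Finset.mul_sum]
    congr 1
  have hhalf : ((1 / 2 : ℂ) * ∑ i, ∑ j, (B i j : ℂ) * ∫ s, d2 i j s * cφ s).re
      = (1 / 2) * (∑ i, ∑ j, (B i j : ℂ) * ∫ s, d2 i j s * cφ s).re := by
    simp [Complex.mul_re]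
  have hχre : χ.re = (1 / 2) * (∑ i, ∑ j, (B i j : ℂ) * ∫ s, d2 i j s * cφ s).re
      - H.trace - (-(1 / 2) * H.trace) := by
    rw [hP, hsum, Complex.sub_re, Complex.sub_re, hKsum, hhalf, Complex.ofReal_re]
  rw [hχre]
  nlinarith [hA]
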